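/- Let ℓ > 0 and c ∈ (0,1), and let y : [−(ℓ+2), ℓ+2] → [0,∞) be an even function (y(−x) = y(x)) with y((ℓ+1)c) = c and y(ℓ+1) = 1, which is differentiable at (ℓ+1)c with y'((ℓ+1)c) = 0. Let E = {(x,z) ∈ ℝ² : |x| ≤ ℓ+2 and |z| ≤ y(x)}. Then E is not star-shaped with respect to any of its points: there is no p ∈ E such that for every q ∈ E the segment [p,q] is contained in E. -/

import Mathlib

open Set Filter

private lemma neck_core
    (ℓ c : ℝ) (hℓ : 0 < ℓ) (hc : c ∈ Ioo (0:ℝ) 1)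
    (y : ℝ → ℝ)
    (hyc : y ((ℓ + 1) * c) = c)
    (hy1 : y (ℓ + 1) = 1)
    (hderiv : HasDerivAt y 0 ((ℓ + 1) * c))
    (p : ℝ × ℝ) (hp1 : p.1 ≤ 0)
    (hstar : ∀ q ∈ {q : ℝ × ℝ | |q.1| ≤ ℓ + 2 ∧ |q.2| ≤ y q.1},
        segment ℝ p q ⊆ {q : ℝ × ℝ | |q.1| ≤ ℓ + 2 ∧ |q.2| ≤ y q.1}) : False := by
  obtain ⟨hc0, hc1⟩ := hc
  set a : ℝ := (ℓ + 1) * c with ha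
  set d : ℝ := ℓ + 1 - p.1 with hd
  have hd0 : 0 < d := by simp only [hd]; linarith
  set t : ℝ := (a - p.1) / d with ht
  have htd : t * d = a - p.1 := div_mul_cancel₀ _ (ne_of_gt hd0)
  have htc : c ≤ t := by
    rw [ht, le_div_iff₀ hd0]
    nlinarith
  have ht1 : t < 1 := by
    rw [ht, div_lt_one hd0]
    nlinarith
  have hq1 : ((ℓ + 1, (1:ℝ)) : ℝ × ℝ) ∈
      {q : ℝ × ℝ | |q.1| ≤ ℓ + 2 ∧ |q.2| ≤ y q.1} := by
    refine ⟨?_, ?_⟩ <;> simp only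
    · rw [abs_of_pos (by linarith)]; linarith
    · simp [hy1]
  have hq2 : ((ℓ + 1, (-1:ℝ)) : ℝ × ℝ) ∈
      {q : ℝ × ℝ | |q.1| ≤ ℓ + 2 ∧ |q.2| ≤ y q.1} := by
    refine ⟨?_, ?_⟩ <;> simp only
    · rw [abs_of_pos (by linarith)]; linarith
    · simp [hy1]
  -- key estimate: the two segments force y to grow at least linearly to the right of a
  have hkey : ∀ s : ℝ, 0 < s → s ≤ 1 - t → c + s ≤ y (a + s * d) := by
    intro s hs0 hs1
    set u : ℝ := t + s with hu
    have hu0 : 0 ≤ u := by rw [hu]; linarith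
    have hu1 : u ≤ 1 := by rw [hu]; linarith
    have hxcoord : (1 - u) * p.1 + u * (ℓ + 1) = a + s * d := by
      have : u * d = (a - p.1) + s * d := by rw [hu, add_mul, htd]
      nlinarith [this]
    have hm1 : ((1 - u) • p + u • ((ℓ + 1, (1:ℝ)) : ℝ × ℝ)) ∈
        {q : ℝ × ℝ | |q.1| ≤ ℓ + 2 ∧ |q.2| ≤ y q.1} :=
      hstar _ hq1 ⟨1 - u, u, by linarith, hu0, by ring, rfl⟩
    have hm2 : ((1 - u) • p + u • ((ℓ + 1, (-1:ℝ)) : ℝ × ℝ)) ∈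
        {q : ℝ × ℝ | |q.1| ≤ ℓ + 2 ∧ |q.2| ≤ y q.1} :=
      hstar _ hq2 ⟨1 - u, u, by linarith, hu0, by ring, rfl⟩
    have h1 : (1 - u) * p.2 + u * 1 ≤ y (a + s * d) := by
      have := hm1.2
      simp only [Prod.smul_def, Prod.fst_add, Prod.snd_add, Prod.smul_fst, Prod.smul_snd,
        smul_eq_mul] at this
      rw [hxcoord] at this
      exact le_trans (le_abs_self _) this
    have h2 : -((1 - u) * p.2 + u * (-1)) ≤ y (a + s * d) := by
      have := hm2.2
      simp only [Prod.smul_def, Prod.fst_add, Prod.snd_add, Prod.smul_fst, Prod.smul_snd,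
        smul_eq_mul] at this
      rw [hxcoord] at this
      exact le_trans (neg_le_abs _) this
    have : u ≤ y (a + s * d) := by linarith
    calc c + s ≤ t + s := by linarith
    _ = u := hu.symm
    _ ≤ y (a + s * d) := this
  -- derivative contradiction
  have hg : HasDerivAt (fun s : ℝ => a + s * d) d 0 := by
    simpa using ((hasDerivAt_id (0:ℝ)).mul_const d).const_add a
  have hcomp : HasDerivAt (fun s : ℝ => y (a + s * d)) 0 0 := by
    have : HasDerivAt y 0 (a + 0 * d) := by simpa using hderiv
    have h2 := this.comp 0 hg
    rw [zero_mul] at h2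
    exact h2
  set f : ℝ → ℝ := fun s : ℝ => y (a + s * d) with hf
  have hf0 : f 0 = c := by simp [hf, hyc]
  rw [hasDerivAt_iff_tendsto_slope] at hcomp
  have htend : Tendsto (slope f 0) (nhdsWithin 0 (Ioi 0)) (nhds 0) :=
    hcomp.mono_left (nhdsWithin_mono 0 (fun x hx => ne_of_gt hx))
  have hev1 : ∀ᶠ s in nhdsWithin 0 (Ioi 0), slope f 0 s < 1 :=
    htend.eventually (Filter.Tendsto.eventually_lt_const zero_lt_one tendsto_id)
  have hev2 : ∀ᶠ s in nhdsWithin 0 (Ioi 0), 1 ≤ slope f 0 s := by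
    filter_upwards [Ioc_mem_nhdsGT_of_mem
      (show (0:ℝ) ∈ Ico (0:ℝ) (1 - t) from ⟨le_refl _, by linarith⟩)] with s hs
    obtain ⟨hs0, hs1⟩ := hs
    have hk := hkey s hs0 hs1
    rw [slope_def_field, hf0]
    rw [le_div_iff₀ (by linarith : (0:ℝ) < s - 0)]
    show 1 * (s - 0) ≤ y (a + s * d) - c
    linarith
  have : ∃ s, slope f 0 s < 1 ∧ 1 ≤ slope f 0 s := (hev1.and hev2).exists
  obtain ⟨s, h1, h2⟩ := this
  linarith

/-- The non-star-shapedness claim of Appendix A.2: for the even generating graph `y` of the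
constructed surface (value `c` with horizontal tangent at `(ℓ+1)c`, value `1` at `ℓ+1`),
the planar region `E = {(x,z) : |x| ≤ ℓ+2, |z| ≤ y(x)}` is not star-shaped with respect to
any of its points. -/
theorem neck_region_not_star_shaped
    (ℓ c : ℝ) (hℓ : 0 < ℓ) (hc : c ∈ Ioo (0:ℝ) 1)
    (y : ℝ → ℝ)
    (heven : ∀ x : ℝ, y (-x) = y x)
    (hnonneg : ∀ x ∈ Icc (-(ℓ + 2)) (ℓ + 2), 0 ≤ y x)
    (hyc : y ((ℓ + 1) * c) = c)
    (hy1 : y (ℓ + 1) = 1)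
    (hderiv : HasDerivAt y 0 ((ℓ + 1) * c)) :
    ¬ ∃ p ∈ {q : ℝ × ℝ | |q.1| ≤ ℓ + 2 ∧ |q.2| ≤ y q.1},
      ∀ q ∈ {q : ℝ × ℝ | |q.1| ≤ ℓ + 2 ∧ |q.2| ≤ y q.1},
        segment ℝ p q ⊆ {q : ℝ × ℝ | |q.1| ≤ ℓ + 2 ∧ |q.2| ≤ y q.1} := by
  rintro ⟨p, hp, hstar⟩
  rcases le_or_gt p.1 0 with h1 | h1
  · exact neck_core ℓ c hℓ hc y hyc hy1 hderiv p h1 hstar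
  · -- reflect in x
    refine neck_core ℓ c hℓ hc y hyc hy1 hderiv (-p.1, p.2) (by simp only; linarith) ?_
    intro q hq m hm
    obtain ⟨α, β, hα, hβ, hαβ, hmeq⟩ := hm
    have hr : ((-q.1, q.2) : ℝ × ℝ) ∈ {q : ℝ × ℝ | |q.1| ≤ ℓ + 2 ∧ |q.2| ≤ y q.1} := by
      refine ⟨by simpa [abs_neg] using hq.1, ?_⟩
      simpa [heven q.1] using hq.2
    have hm' : (α • p + β • ((-q.1, q.2) : ℝ × ℝ)) ∈
        {q : ℝ × ℝ | |q.1| ≤ ℓ + 2 ∧ |q.2| ≤ y q.1} :=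
      hstar _ hr ⟨α, β, hα, hβ, hαβ, rfl⟩
    have hx : (α • p + β • ((-q.1, q.2) : ℝ × ℝ)).1 = -m.1 := by
      rw [← hmeq]; simp [Prod.smul_def]; ring
    have hz : (α • p + β • ((-q.1, q.2) : ℝ × ℝ)).2 = m.2 := by
      rw [← hmeq]; simp [Prod.smul_def]
    obtain ⟨hA, hB⟩ := hm'
    rw [hx] at hA
    rw [hz, hx] at hB
    exact ⟨by simpa [abs_neg] using hA, by simpa [heven m.1] using hB⟩
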